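/- For every Δ ≥ 2 there exists a connected graph G with maximum degree Δ whose degeneracy is ⌊Δ/2⌋: namely, attach ⌈Δ/2⌉ leaves to every vertex of the complete bipartite graph K_{⌊Δ/2⌋,⌊Δ/2⌋}. This graph has maximum degree exactly Δ and every subgraph of minimum degree ≥ 2 lies inside the K_{⌊Δ/2⌋,⌊Δ/2⌋} core. -/

import Mathlib

def attachLeaves {V : Type*} (H : SimpleGraph V) (ℓ : ℕ) :
    SimpleGraph (V ⊕ V × Fin ℓ) :=
  SimpleGraph.fromRel (fun a b =>
    match a, b with
    | Sum.inl u, Sum.inl v => H.Adj u v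
    | Sum.inl u, Sum.inr w => u = w.1
    | _, _ => False)

noncomputable def degeneracy {V : Type*} (G : SimpleGraph V) : ℕ :=
  sSup {d | ∃ H : G.Subgraph, H.verts.Nonempty ∧ ∀ v ∈ H.verts, d ≤ (H.neighborSet v).ncard}

section aux
variable {V : Type*} {H : SimpleGraph V} {ℓ : ℕ}

lemma al_adj_ll {u v : V} : (attachLeaves H ℓ).Adj (Sum.inl u) (Sum.inl v) ↔ H.Adj u v := by
  simp only [attachLeaves, SimpleGraph.fromRel_adj]
  constructor
  · rintro ⟨-, h | h⟩
    · exact h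
    · exact h.symm
  · intro h
    exact ⟨by simp [h.ne], Or.inl h⟩

lemma al_adj_lr {u : V} {w : V × Fin ℓ} :
    (attachLeaves H ℓ).Adj (Sum.inl u) (Sum.inr w) ↔ u = w.1 := by
  simp only [attachLeaves, SimpleGraph.fromRel_adj]
  constructor
  · rintro ⟨-, h | h⟩
    · exact h
    · exact h.elim
  · intro h
    exact ⟨by simp, Or.inl h⟩

lemma al_adj_rr {w w' : V × Fin ℓ} :
    ¬ (attachLeaves H ℓ).Adj (Sum.inr w) (Sum.inr w') := by
  simp [attachLeaves, SimpleGraph.fromRel_adj]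

lemma al_nbr_inr (w : V × Fin ℓ) :
    (attachLeaves H ℓ).neighborSet (Sum.inr w) = {Sum.inl w.1} := by
  ext x
  cases x with
  | inl u => simp [SimpleGraph.mem_neighborSet, (attachLeaves H ℓ).adj_comm, al_adj_lr, eq_comm]
  | inr w' => simp [SimpleGraph.mem_neighborSet, (attachLeaves H ℓ).adj_comm, al_adj_rr]

lemma al_nbr_inl (u : V) :
    (attachLeaves H ℓ).neighborSet (Sum.inl u) =
      Sum.inl '' (H.neighborSet u) ∪ Sum.inr '' ({u} ×ˢ (Set.univ : Set (Fin ℓ))) := by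
  ext x
  cases x with
  | inl v => simp [SimpleGraph.mem_neighborSet, al_adj_ll]
  | inr w =>
    simp only [SimpleGraph.mem_neighborSet, al_adj_lr, Set.mem_union, Set.mem_image]
    constructor
    · intro h
      exact Or.inr ⟨w, ⟨h.symm, trivial⟩, rfl⟩
    · rintro (⟨v, -, h⟩ | ⟨w', ⟨h1, -⟩, h⟩)
      · exact absurd h (by simp)
      · obtain rfl := Sum.inr_injective h
        exact h1.symm

end aux

section core
variable {k : ℕ}

lemma cbg_nbr_ncard (u : Fin k ⊕ Fin k) :
    ((completeBipartiteGraph (Fin k) (Fin k)).neighborSet u).ncard = k := by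
  cases u with
  | inl a =>
    have : (completeBipartiteGraph (Fin k) (Fin k)).neighborSet (Sum.inl a)
        = Sum.inr '' Set.univ := by
      ext x
      cases x <;> simp [SimpleGraph.mem_neighborSet]
    rw [this, Set.ncard_image_of_injective _ Sum.inr_injective, Set.ncard_univ, Nat.card_eq_fintype_card, Fintype.card_fin]
  | inr a =>
    have : (completeBipartiteGraph (Fin k) (Fin k)).neighborSet (Sum.inr a)
        = Sum.inl '' Set.univ := by
      ext x
      cases x <;> simp [SimpleGraph.mem_neighborSet]
    rw [this, Set.ncard_image_of_injective _ Sum.inl_injective, Set.ncard_univ, Nat.card_eq_fintype_card, Fintype.card_fin]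

lemma al_nbr_inl_ncard {ℓ : ℕ} (u : Fin k ⊕ Fin k) :
    ((attachLeaves (completeBipartiteGraph (Fin k) (Fin k)) ℓ).neighborSet (Sum.inl u)).ncard
      = k + ℓ := by
  rw [al_nbr_inl]
  rw [Set.ncard_union_eq (by
    rw [Set.disjoint_left]; rintro x ⟨a, -, rfl⟩ ⟨b, -, h⟩; exact absurd h (by simp))
    (Set.toFinite _) (Set.toFinite _)]
  rw [Set.ncard_image_of_injective _ Sum.inl_injective,
    Set.ncard_image_of_injective _ Sum.inr_injective, cbg_nbr_ncard,
    Set.singleton_prod, Set.ncard_image_of_injective _ (Prod.mk_right_injective (a := u)),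
    Set.ncard_univ, Nat.card_eq_fintype_card, Fintype.card_fin]

end core

theorem stmt19 (Δ : ℕ) (hΔ : 2 ≤ Δ) :
    (attachLeaves (completeBipartiteGraph (Fin (Δ / 2)) (Fin (Δ / 2))) ((Δ + 1) / 2)).Connected ∧
    (∀ v, ((attachLeaves (completeBipartiteGraph (Fin (Δ / 2)) (Fin (Δ / 2)))
      ((Δ + 1) / 2)).neighborSet v).ncard ≤ Δ) ∧
    (∃ v, ((attachLeaves (completeBipartiteGraph (Fin (Δ / 2)) (Fin (Δ / 2)))
      ((Δ + 1) / 2)).neighborSet v).ncard = Δ) ∧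
    degeneracy (attachLeaves (completeBipartiteGraph (Fin (Δ / 2)) (Fin (Δ / 2)))
      ((Δ + 1) / 2)) = Δ / 2 ∧
    (∀ H' : (attachLeaves (completeBipartiteGraph (Fin (Δ / 2)) (Fin (Δ / 2)))
        ((Δ + 1) / 2)).Subgraph,
      (∀ v ∈ H'.verts, 2 ≤ (H'.neighborSet v).ncard) →
      ∀ v ∈ H'.verts, ∃ u, v = Sum.inl u) := by
  set k := Δ / 2 with hk_def
  set ℓ := (Δ + 1) / 2 with hℓ_def
  have hk : 1 ≤ k := by omega
  have hkl : k + ℓ = Δ := by omega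
  set K := completeBipartiteGraph (Fin k) (Fin k) with hK_def
  set G := attachLeaves K ℓ with hG_def
  have z : Fin k := ⟨0, hk⟩
  -- part 5 first, as a hypothesis
  have leafless : ∀ H' : G.Subgraph, (∀ v ∈ H'.verts, 2 ≤ (H'.neighborSet v).ncard) →
      ∀ v ∈ H'.verts, ∃ u, v = Sum.inl u := by
    intro H' hmin v hv
    cases v with
    | inl u => exact ⟨u, rfl⟩
    | inr w =>
      exfalso
      have hsub : H'.neighborSet (Sum.inr w) ⊆ {Sum.inl w.1} := by
        rw [← al_nbr_inr w]
        exact H'.neighborSet_subset _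
      have := (Set.ncard_le_ncard hsub (Set.finite_singleton _)).trans_eq
        (Set.ncard_singleton _)
      have := hmin _ hv
      omega
  -- connectivity
  have reach_core : ∀ u : Fin k ⊕ Fin k, G.Reachable (Sum.inl u) (Sum.inl (Sum.inr z)) := by
    intro u
    cases u with
    | inl a => exact (SimpleGraph.Adj.reachable (by simp [hG_def, al_adj_ll, hK_def]))
    | inr b =>
      refine (SimpleGraph.Adj.reachable (v := Sum.inl (Sum.inl z))
        (by simp [hG_def, al_adj_ll, hK_def])).trans
        (SimpleGraph.Adj.reachable (by simp [hG_def, al_adj_ll, hK_def]))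
  have hconn : G.Connected := by
    rw [SimpleGraph.connected_iff]
    refine ⟨fun a b => ?_, ⟨Sum.inl (Sum.inr z)⟩⟩
    have reach : ∀ v, G.Reachable v (Sum.inl (Sum.inr z)) := by
      intro v
      cases v with
      | inl u => exact reach_core u
      | inr w =>
        exact (SimpleGraph.Adj.reachable (v := Sum.inl w.1)
          (by rw [hG_def, (attachLeaves K ℓ).adj_comm, al_adj_lr])).trans (reach_core w.1)
    exact (reach a).trans (reach b).symm
  -- max degree
  have hdeg : ∀ v, (G.neighborSet v).ncard ≤ Δ := by
    intro v
    cases v with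
    | inl u => rw [hG_def, al_nbr_inl_ncard, hkl]
    | inr w =>
      rw [hG_def, al_nbr_inr, Set.ncard_singleton]
      omega
  have hdegex : ∃ v, (G.neighborSet v).ncard = Δ :=
    ⟨Sum.inl (Sum.inl z), by rw [hG_def, al_nbr_inl_ncard, hkl]⟩
  -- key intersection fact
  have hGcap : ∀ u, G.neighborSet (Sum.inl u) ∩ Set.range Sum.inl
      = Sum.inl '' K.neighborSet u := by
    intro u
    rw [hG_def, al_nbr_inl]
    ext x
    constructor
    · rintro ⟨h, y, rfl⟩
      rcases h with h | ⟨w, -, hw⟩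
      · exact h
      · exact absurd hw (by simp)
    · rintro ⟨v, hv, rfl⟩
      exact ⟨Or.inl ⟨v, hv, rfl⟩, v, rfl⟩
  -- degeneracy
  have hdegen : degeneracy G = k := by
    have hmem : k ∈ {d | ∃ H : G.Subgraph, H.verts.Nonempty ∧
        ∀ v ∈ H.verts, d ≤ (H.neighborSet v).ncard} := by
      refine ⟨(⊤ : G.Subgraph).induce (Set.range Sum.inl), ⟨Sum.inl (Sum.inl z), ⟨_, rfl⟩⟩, ?_⟩
      rintro v ⟨u, rfl⟩
      have : ((⊤ : G.Subgraph).induce (Set.range Sum.inl)).neighborSet (Sum.inl u)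
          = Sum.inl '' K.neighborSet u := by
        rw [← hGcap u]
        ext x
        simp only [SimpleGraph.Subgraph.mem_neighborSet, SimpleGraph.Subgraph.induce_adj,
          SimpleGraph.Subgraph.top_adj, Set.mem_inter_iff, Set.mem_range]
        constructor
        · rintro ⟨-, hx, h⟩
          exact ⟨h, hx⟩
        · rintro ⟨h, hx⟩
          exact ⟨⟨u, rfl⟩, hx, h⟩
      rw [this, Set.ncard_image_of_injective _ Sum.inl_injective, cbg_nbr_ncard]
    have hub : ∀ d ∈ {d | ∃ H : G.Subgraph, H.verts.Nonempty ∧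
        ∀ v ∈ H.verts, d ≤ (H.neighborSet v).ncard}, d ≤ k := by
      rintro d ⟨H', ⟨v, hv⟩, hmin⟩
      by_cases hd : d ≤ 1
      · omega
      · have hmin2 : ∀ v ∈ H'.verts, 2 ≤ (H'.neighborSet v).ncard := by
          intro v hv
          exact le_trans (by omega) (hmin v hv)
        obtain ⟨u, rfl⟩ := leafless H' hmin2 v hv
        have hsub : H'.neighborSet (Sum.inl u) ⊆ Sum.inl '' K.neighborSet u := by
          rw [← hGcap u]
          intro x hx
          refine ⟨H'.neighborSet_subset _ hx, ?_⟩
          have hxv : x ∈ H'.verts := H'.edge_vert (SimpleGraph.Subgraph.adj_symm _ hx)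
          obtain ⟨y, rfl⟩ := leafless H' hmin2 x hxv
          exact ⟨y, rfl⟩
        calc d ≤ (H'.neighborSet (Sum.inl u)).ncard := hmin _ hv
          _ ≤ (Sum.inl '' K.neighborSet u).ncard := Set.ncard_le_ncard hsub (Set.toFinite _)
          _ = k := by rw [Set.ncard_image_of_injective _ Sum.inl_injective, cbg_nbr_ncard]
    exact le_antisymm (csSup_le ⟨k, hmem⟩ hub) (le_csSup ⟨k, hub⟩ hmem)
  exact ⟨hconn, hdeg, hdegex, hdegen, leafless⟩
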